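/- Let a ∈ ℝ^d, V ∈ G(d,l), 0 < δ < 1, 1/(δ+1) < ϱ < 1, and suppose x, y ∈ ℝ^d with y ∉ X(x,W,δ) for some W ∈ G(d,l) and y ≠ x. Then there exists 0 < η < 1, depending only on δ and ϱ, such that B(y, η·r') ⊂ B(x, r') \ X(x, W, ϱδ), where r' = 2|x−y|. -/

import Mathlib

open Metric Set

/-- Projection onto the orthogonal complement of `V`. -/
noncomputable def projQ {d : ℕ} (V : Submodule ℝ (EuclideanSpace ℝ (Fin d))) :
    EuclideanSpace ℝ (Fin d) →L[ℝ] EuclideanSpace ℝ (Fin d) :=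
  Vᗮ.subtypeL.comp (Submodule.orthogonalProjectionOnto Vᗮ)

/-- The open cone at `a` around the plane `V` with aperture parameter `δ`. -/
noncomputable def coneX {d : ℕ} (a : EuclideanSpace ℝ (Fin d))
    (V : Submodule ℝ (EuclideanSpace ℝ (Fin d))) (δ : ℝ) : Set (EuclideanSpace ℝ (Fin d)) :=
  {x | ‖projQ V (x - a)‖ < Real.sqrt δ * ‖x - a‖}

/-- a point outside the `δ`-cone has a whole ball around it, of
radius a definite fraction of `|x-y|` depending only on `δ` and `ϱ`, outside
the `ϱδ`-cone and inside `B(x, 2|x−y|)`. -/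
theorem statement8 (d l : ℕ) (h0 : 0 < l) (hld : l < d)
    (δ ϱ : ℝ) (hδ0 : 0 < δ) (hδ1 : δ < 1) (hϱ : 1 / (δ + 1) < ϱ) (hϱ1 : ϱ < 1) :
    ∃ η : ℝ, 0 < η ∧ η < 1 ∧
      ∀ (x y : EuclideanSpace ℝ (Fin d))
        (W : Submodule ℝ (EuclideanSpace ℝ (Fin d))),
        Module.finrank ℝ W = l → y ∉ coneX x W δ → y ≠ x →
        ball y (η * (2 * ‖x - y‖)) ⊆
          ball x (2 * ‖x - y‖) \ coneX x W (ϱ * δ) := by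
  have hQle : ∀ (W : Submodule ℝ (EuclideanSpace ℝ (Fin d)))
      (v : EuclideanSpace ℝ (Fin d)), ‖projQ W v‖ ≤ ‖v‖ := by
    intro W v
    have := (Submodule.orthogonalProjectionOnto Wᗮ).le_of_opNorm_le (Submodule.orthogonalProjectionOnto_norm_le Wᗮ) v
    simpa [projQ] using this.trans (by simp [one_mul] : (1:ℝ) * ‖v‖ ≤ ‖v‖)
  have hδs : (0:ℝ) < Real.sqrt δ := Real.sqrt_pos.2 hδ0
  have hϱ0 : (0:ℝ) < ϱ := lt_trans (by positivity) hϱ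
  have hlt : Real.sqrt (ϱ * δ) < Real.sqrt δ :=
    Real.sqrt_lt_sqrt (by positivity) (by nlinarith)
  have hs1 : Real.sqrt δ < 1 := by
    rw [show (1:ℝ) = Real.sqrt 1 by simp]
    exact Real.sqrt_lt_sqrt hδ0.le hδ1
  have hs0 : (0:ℝ) ≤ Real.sqrt (ϱ * δ) := Real.sqrt_nonneg _
  refine ⟨(Real.sqrt δ - Real.sqrt (ϱ * δ)) / 4, by linarith, by linarith, ?_⟩
  set η := (Real.sqrt δ - Real.sqrt (ϱ * δ)) / 4 with hη
  intro x y W _ hy hyx z hz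
  have hr0 : (0:ℝ) < ‖x - y‖ := by
    rw [norm_pos_iff, sub_ne_zero]; exact fun h => hyx h.symm
  rw [mem_ball, dist_eq_norm] at hz
  have hQy : Real.sqrt δ * ‖y - x‖ ≤ ‖projQ W (y - x)‖ := not_lt.1 hy
  have hyx' : ‖y - x‖ = ‖x - y‖ := norm_sub_rev _ _
  have hzy : ‖z - y‖ < η * (2 * ‖x - y‖) := hz
  have hzx : ‖z - x‖ ≤ ‖z - y‖ + ‖y - x‖ := by
    have := dist_triangle z y x
    simpa [dist_eq_norm] using this
  have hη2 : 2 * η * ‖x - y‖ + ‖x - y‖ < 2 * ‖x - y‖ := by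
    have : η < 1 / 2 := by rw [hη]; linarith
    nlinarith
  constructor
  · rw [mem_ball, dist_eq_norm]
    calc ‖z - x‖ ≤ ‖z - y‖ + ‖y - x‖ := hzx
    _ < η * (2 * ‖x - y‖) + ‖x - y‖ := by rw [hyx']; linarith
    _ < 2 * ‖x - y‖ := by linarith
  · intro hc
    rw [coneX, mem_setOf_eq] at hc
    have hdiff : ‖projQ W (y - x)‖ - ‖projQ W (z - x)‖ ≤ ‖z - y‖ := by
      have h1 : ‖projQ W (y - x)‖ - ‖projQ W (z - x)‖ ≤ ‖projQ W (y - x) - projQ W (z - x)‖ :=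
        norm_sub_norm_le _ _
      have h2 : projQ W (y - x) - projQ W (z - x) = projQ W (y - z) := by
        rw [← map_sub]; congr 1; abel
      calc ‖projQ W (y - x)‖ - ‖projQ W (z - x)‖ ≤ ‖projQ W (y - z)‖ := by rw [← h2]; exact h1
      _ ≤ ‖y - z‖ := hQle W _
      _ = ‖z - y‖ := norm_sub_rev _ _
    set s := Real.sqrt δ
    set t := Real.sqrt (ϱ * δ)
    have hQzx : s * ‖x - y‖ - ‖z - y‖ ≤ ‖projQ W (z - x)‖ := by
      rw [← hyx']; linarith
    have htw : ‖projQ W (z - x)‖ < t * ‖z - x‖ := hc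
    have hz2 : ‖z - y‖ < 2 * η * ‖x - y‖ := by linarith
    have hw : t * ‖z - x‖ ≤ t * (‖z - y‖ + ‖x - y‖) := by
      apply mul_le_mul_of_nonneg_left _ hs0
      rwa [hyx'] at hzx
    have ht1 : t < 1 := lt_trans hlt hs1
    have hz3 : ‖z - y‖ < (s - t) / 2 * ‖x - y‖ := by rw [hη] at hz2; linarith
    nlinarith [mul_lt_mul_of_pos_left hz3 (show (0:ℝ) < 1 + t by linarith),
      mul_pos (mul_pos hr0 (sub_pos.2 hlt)) (sub_pos.2 ht1)]
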